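/- In the finite dynamic game model, the private observation histories of the players are conditionally independent given the state of the world and the public action history: for every time t, every state v, every action history a_{1:t-1}, and every observation history x_{1:t} such that ℙ(V = v, A_{1:t-1} = a_{1:t-1}) > 0, one has ℙ(X_{1:t} = x_{1:t} | V = v, A_{1:t-1} = a_{1:t-1}) = ∏_{i=1}^{N} ℙ(X^i_{1:t} = x^i_{1:t} | V = v, A_{1:t-1} = a_{1:t-1}). -/

import Mathlib

open Finset

/-- Finite dynamic game model with `N` players and horizon `T`:
a finite set of states of the world with prior `QV`, per-player finite observation and
action sets, observation kernels `QX i (· | v, a_{t-1})` (with `a0` the dummy initial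
action profile) and behavioral strategies `g i t (· | x^i_{1:t}, a_{1:t-1})` that are
adapted to player `i`'s private history and the public action history. -/
structure GameModel (N T : ℕ) where
  V : Type
  X : Fin N → Type
  A : Fin N → Type
  fV : Fintype V
  fX : ∀ i, Fintype (X i)
  fA : ∀ i, Fintype (A i)
  QV : V → ℝ
  a0 : ∀ i, A i
  QX : ∀ i, X i → V → (∀ j, A j) → ℝ
  g : ∀ i, Fin T → A i → (Fin T → X i) → (Fin T → ∀ j, A j) → ℝ
  QV_nonneg : ∀ v, 0 ≤ QV v
  QV_sum : ∑ v, QV v = 1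
  QX_nonneg : ∀ i x v a, 0 ≤ QX i x v a
  QX_sum : ∀ i v a, ∑ x, QX i x v a = 1
  g_nonneg : ∀ i t ai x a, 0 ≤ g i t ai x a
  g_sum : ∀ i t x a, ∑ ai, g i t ai x a = 1
  g_adapted : ∀ i (t : Fin T) ai x x' a a',
    (∀ s, s ≤ t → x s = x' s) → (∀ s, s < t → a s = a' s) →
    g i t ai x a = g i t ai x' a'

attribute [instance] GameModel.fV GameModel.fX GameModel.fA

variable {N T : ℕ}

/-- A complete history/outcome `(v, x_{1:T}, a_{1:T})`; time `τ ∈ {1,…,T}` is the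
index `τ - 1 : Fin T`. -/
abbrev GameModel.Hist (M : GameModel N T) : Type :=
  M.V × (Fin T → ∀ i, M.X i) × (Fin T → ∀ i, M.A i)

/-- The action profile `a_{t-1}` preceding time `t` (the dummy `a0` for `t = 1`). -/
def GameModel.prevA (M : GameModel N T) (a : Fin T → ∀ i, M.A i) (t : Fin T) :
    ∀ i, M.A i :=
  if (t : ℕ) = 0 then M.a0
  else a ⟨(t : ℕ) - 1, lt_of_le_of_lt (Nat.sub_le _ _) t.isLt⟩

/-- The joint probability mass
`ℙ(v, x_{1:T}, a_{1:T}) = QV v ∏_t ∏_i QX^i(x^i_t|v,a_{t-1}) g^i_t(a^i_t|x^i_{1:t},a_{1:t-1})`. -/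
noncomputable def GameModel.jointP (M : GameModel N T) (ω : M.Hist) : ℝ :=
  M.QV ω.1 *
    ∏ t : Fin T, ∏ i : Fin N,
      M.QX i (ω.2.1 t i) ω.1 (M.prevA ω.2.2 t) *
        M.g i t (ω.2.2 t i) (fun s => ω.2.1 s i) ω.2.2

open Classical in
/-- Probability of an event under the joint distribution. -/
noncomputable def GameModel.Pr (M : GameModel N T) (E : M.Hist → Prop) : ℝ :=
  ∑ ω : M.Hist, if E ω then M.jointP ω else 0

namespace CondIndepAux

lemma peel {ι β : Type*} [Fintype ι] [DecidableEq ι] [Fintype β] (k : ι)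
    (f F : (ι → β) → ℝ)
    (hf : ∀ z c, f (Function.update z k c) = f z)
    (hF : ∀ z, (∑ c, F (Function.update z k c)) = 1) :
    (Fintype.card β : ℝ) * ∑ z, f z * F z = ∑ z, f z := by
  classical
  rcases isEmpty_or_nonempty β with hβ | hβ
  · haveI : IsEmpty (ι → β) := ⟨fun z => (hβ.false (z k)).elim⟩
    simp
  · obtain ⟨b₀⟩ := hβ
    set e := Equiv.funSplitAt k β with he
    have key : ∀ (c c' : β) (r : {j // j ≠ k} → β),
        Function.update (e.symm (c', r)) k c = e.symm (c, r) := by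
      intro c c' r
      funext j
      rcases eq_or_ne j k with rfl | hj
      · simp [he, Equiv.funSplitAt, Equiv.piSplitAt, Function.update]
      · simp [he, Equiv.funSplitAt, Equiv.piSplitAt, Function.update, hj]
    have expand : ∀ G : (ι → β) → ℝ,
        ∑ z, G z = ∑ r : {j // j ≠ k} → β, ∑ c, G (e.symm (c, r)) := by
      intro G
      rw [← Equiv.sum_comp e.symm G, Fintype.sum_prod_type, Finset.sum_comm]
    rw [expand (fun z => f z * F z), expand f]
    have hfc : ∀ c (r : {j // j ≠ k} → β), f (e.symm (c, r)) = f (e.symm (b₀, r)) := by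
      intro c r; rw [← key c b₀ r, hf]
    have h1 : ∀ r : {j // j ≠ k} → β,
        ∑ c, f (e.symm (c, r)) * F (e.symm (c, r)) = f (e.symm (b₀, r)) := by
      intro r
      have hs : ∑ c, F (e.symm (c, r)) = 1 := by
        have := hF (e.symm (b₀, r))
        simpa only [key] using this
      calc ∑ c, f (e.symm (c, r)) * F (e.symm (c, r))
          = f (e.symm (b₀, r)) * ∑ c, F (e.symm (c, r)) := by
            rw [Finset.mul_sum]; exact Finset.sum_congr rfl fun c _ => by rw [hfc c]
        _ = f (e.symm (b₀, r)) := by rw [hs, mul_one]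
    have h2 : ∀ r : {j // j ≠ k} → β,
        ∑ c, f (e.symm (c, r)) = (Fintype.card β : ℝ) * f (e.symm (b₀, r)) := by
      intro r
      rw [Finset.sum_congr rfl fun c _ => hfc c r]
      simp [Finset.sum_const, Finset.card_univ, mul_comm]
    simp only [h1, h2]
    rw [Finset.mul_sum]

section Aux

variable (M : GameModel N T) (t : Fin T) (v : M.V)
  (xd : ∀ i, M.X i) (ad : ∀ i, M.A i) (a : Fin T → ∀ i, M.A i)

/-- truncation of a private observation path after time `s`. -/
def ty (i : Fin N) (s : Fin T) (y : Fin T → M.X i) : Fin T → M.X i :=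
  fun s' => if s' ≤ s then y s' else xd i

/-- truncation of a public action path strictly before time `s`. -/
def ta (s : Fin T) (b : Fin T → ∀ i, M.A i) : Fin T → ∀ i, M.A i :=
  fun s' => if s' < s then b s' else ad

lemma g_ty_ta (i : Fin N) (s : Fin T) (ai : M.A i) (y : Fin T → M.X i)
    (b : Fin T → ∀ i, M.A i) :
    M.g i s ai (ty M xd i s y) (ta M ad s b) = M.g i s ai y b := by
  refine (M.g_adapted i s ai y (ty M xd i s y) b (ta M ad s b) ?_ ?_).symm
  · intro s' h; simp [ty, h]
  · intro s' h; simp [ta, h]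

noncomputable def qpart (s : Fin T) (xx : Fin T → ∀ i, M.X i)
    (b : Fin T → ∀ i, M.A i) : ℝ :=
  ∏ i, M.QX i (xx s i) v (M.prevA b s)

noncomputable def gpart (s : Fin T) (xx : Fin T → ∀ i, M.X i)
    (b : Fin T → ∀ i, M.A i) : ℝ :=
  ∏ i, M.g i s (b s i) (ty M xd i s (fun s' => xx s' i)) (ta M ad s b)

lemma jointP_eq (xx : Fin T → ∀ i, M.X i) (b : Fin T → ∀ i, M.A i) :
    M.jointP (v, xx, b)
      = M.QV v * ∏ s, (qpart M v s xx b * gpart M xd ad s xx b) := by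
  unfold GameModel.jointP qpart gpart
  dsimp only
  congr 1
  refine Finset.prod_congr rfl fun s _ => ?_
  rw [Finset.prod_mul_distrib]
  congr 1
  exact Finset.prod_congr rfl fun i _ => (g_ty_ta M xd ad i s _ _ _).symm

open Classical in
noncomputable def ind (p : ∀ i, (Fin T → M.X i) → Prop)
    (xx : Fin T → ∀ i, M.X i) (b : Fin T → ∀ i, M.A i) : ℝ :=
  if (∀ i, p i (fun s => xx s i)) ∧ (∀ s, s < t → b s = a s) then 1 else 0

noncomputable def Pk (p : ∀ i, (Fin T → M.X i) → Prop) (k : ℕ) : ℝ :=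
  ∑ xx : Fin T → ∀ i, M.X i, ∑ b : Fin T → ∀ i, M.A i,
    ind M t a p xx b * ∏ s ∈ univ.filter (fun s : Fin T => (s : ℕ) < k),
      (qpart M v s xx b * gpart M xd ad s xx b)

noncomputable def Pk' (p : ∀ i, (Fin T → M.X i) → Prop) (k : Fin T) : ℝ :=
  ∑ xx : Fin T → ∀ i, M.X i, ∑ b : Fin T → ∀ i, M.A i,
    ind M t a p xx b * (qpart M v k xx b *
      ∏ s ∈ univ.filter (fun s : Fin T => (s : ℕ) < (k : ℕ)),
        (qpart M v s xx b * gpart M xd ad s xx b))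

lemma prevA_update (b : Fin T → ∀ i, M.A i) (k : Fin T) (c : ∀ i, M.A i) (s : Fin T)
    (h : (s : ℕ) ≤ (k : ℕ)) : M.prevA (Function.update b k c) s = M.prevA b s := by
  unfold GameModel.prevA
  split
  · rfl
  · next h0 =>
    rw [Function.update_of_ne (Fin.ne_of_val_ne (by simp only [Fin.val_mk]; omega))]

lemma ta_update (b : Fin T → ∀ i, M.A i) (k : Fin T) (c : ∀ i, M.A i) (s : Fin T)
    (h : (s : ℕ) ≤ (k : ℕ)) : ta M ad s (Function.update b k c) = ta M ad s b := by
  funext s'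
  unfold ta
  split
  · next h' => rw [Function.update_of_ne (Fin.ne_of_val_ne (by
      have := Fin.lt_def.mp h'; omega))]
  · rfl

lemma ty_updateX (xx : Fin T → ∀ i, M.X i) (k : Fin T) (c : ∀ i, M.X i) (i : Fin N)
    (s : Fin T) (h : (s : ℕ) < (k : ℕ)) :
    ty M xd i s (fun s' => Function.update xx k c s' i)
      = ty M xd i s (fun s' => xx s' i) := by
  funext s'
  unfold ty
  split
  · next h' =>
    have hne : s' ≠ k := Fin.ne_of_val_ne (by have := Fin.le_def.mp h'; omega)
    simp only [Function.update_of_ne hne]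
  · rfl

lemma ind_updateB (p : ∀ i, (Fin T → M.X i) → Prop) (xx : Fin T → ∀ i, M.X i)
    (b : Fin T → ∀ i, M.A i) (k : Fin T) (hk : t ≤ k) (c : ∀ i, M.A i) :
    ind M t a p xx (Function.update b k c) = ind M t a p xx b := by
  classical
  unfold ind
  refine if_congr (and_congr_right fun _ => forall_congr' fun s => imp_congr_right
    fun hs => ?_) rfl rfl
  rw [Function.update_of_ne (Fin.ne_of_val_ne (by
    have h1 := Fin.lt_def.mp hs; have h2 := Fin.le_def.mp hk; omega))]


lemma filter_succ (k : Fin T) :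
    univ.filter (fun s : Fin T => (s : ℕ) < (k : ℕ) + 1)
      = insert k (univ.filter (fun s : Fin T => (s : ℕ) < (k : ℕ))) := by
  ext s
  simp only [mem_filter, mem_univ, true_and, mem_insert, Fin.ext_iff]
  omega

lemma stepg (p : ∀ i, (Fin T → M.X i) → Prop) (k : Fin T) (hk : t ≤ k) :
    (Fintype.card (∀ i, M.A i) : ℝ) * Pk M t v xd ad a p ((k : ℕ) + 1)
      = Pk' M t v xd ad a p k := by
  unfold Pk Pk'
  rw [Finset.mul_sum]
  refine Finset.sum_congr rfl fun xx _ => ?_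
  have lhs_eq : ∀ b : Fin T → ∀ i, M.A i,
      ind M t a p xx b * ∏ s ∈ univ.filter (fun s : Fin T => (s : ℕ) < (k : ℕ) + 1),
        (qpart M v s xx b * gpart M xd ad s xx b)
      = (ind M t a p xx b * (qpart M v k xx b *
          ∏ s ∈ univ.filter (fun s : Fin T => (s : ℕ) < (k : ℕ)),
            (qpart M v s xx b * gpart M xd ad s xx b))) * gpart M xd ad k xx b := by
    intro b
    rw [filter_succ, Finset.prod_insert (by simp)]
    ring
  simp only [lhs_eq]
  refine peel k _ _ ?_ ?_
  · intro b c
    rw [ind_updateB M t a p xx b k hk c]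
    congr 2
    · unfold qpart
      rw [prevA_update M b k c k (le_refl _)]
    · refine Finset.prod_congr rfl fun s hs => ?_
      have hsk : (s : ℕ) < (k : ℕ) := by simpa using hs
      congr 1
      · unfold qpart
        rw [prevA_update M b k c s (le_of_lt hsk)]
      · unfold gpart
        refine Finset.prod_congr rfl fun i _ => ?_
        rw [Function.update_of_ne (Fin.ne_of_val_ne (by omega)),
          ta_update M ad b k c s (le_of_lt hsk)]
  · intro b
    have hg : ∀ c : ∀ i, M.A i, gpart M xd ad k xx (Function.update b k c)
        = ∏ i, M.g i k (c i) (ty M xd i k (fun s' => xx s' i))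
            (ta M ad k b) := by
      intro c
      unfold gpart
      rw [ta_update M ad b k c k (le_refl _)]
      refine Finset.prod_congr rfl fun i _ => ?_
      rw [Function.update_self]
    simp only [hg]
    rw [← Fintype.prod_sum (fun i (c : M.A i) =>
      M.g i k c (ty M xd i k fun s' => xx s' i) (ta M ad k b))]
    simp [M.g_sum]

lemma stepq (p : ∀ i, (Fin T → M.X i) → Prop)
    (hp : ∀ i y y', (∀ s, s ≤ t → y s = y' s) → (p i y ↔ p i y'))
    (k : Fin T) (hk : t < k) :
    (Fintype.card (∀ i, M.X i) : ℝ) * Pk' M t v xd ad a p k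
      = Pk M t v xd ad a p (k : ℕ) := by
  unfold Pk' Pk
  rw [Finset.sum_comm]
  conv_rhs => rw [Finset.sum_comm]
  rw [Finset.mul_sum]
  refine Finset.sum_congr rfl fun b _ => ?_
  have lhs_eq : ∀ xx : Fin T → ∀ i, M.X i,
      ind M t a p xx b * (qpart M v k xx b *
        ∏ s ∈ univ.filter (fun s : Fin T => (s : ℕ) < (k : ℕ)),
          (qpart M v s xx b * gpart M xd ad s xx b))
      = (ind M t a p xx b *
          ∏ s ∈ univ.filter (fun s : Fin T => (s : ℕ) < (k : ℕ)),
            (qpart M v s xx b * gpart M xd ad s xx b)) * qpart M v k xx b := by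
    intro xx; ring
  simp only [lhs_eq]
  refine peel k _ _ ?_ ?_
  · intro xx c
    congr 1
    · unfold ind
      classical
      refine if_congr (and_congr_left fun _ => forall_congr' fun i => ?_) rfl rfl
      refine hp i _ _ fun s hs => ?_
      have hne : s ≠ k := Fin.ne_of_val_ne (by
        have h1 := Fin.le_def.mp hs; have h2 := Fin.lt_def.mp hk; omega)
      simp only [Function.update_of_ne hne]
    · refine Finset.prod_congr rfl fun s hs => ?_
      have hsk : (s : ℕ) < (k : ℕ) := by simpa using hs
      have hne : s ≠ k := Fin.ne_of_val_ne (by omega)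
      congr 1
      · unfold qpart
        refine Finset.prod_congr rfl fun i _ => ?_
        simp only [Function.update_of_ne hne]
      · unfold gpart
        refine Finset.prod_congr rfl fun i _ => ?_
        rw [ty_updateX M xd xx k c i s hsk]
  · intro xx
    have hq : ∀ c : ∀ i, M.X i, qpart M v k (Function.update xx k c) b
        = ∏ i, M.QX i (c i) v (M.prevA b k) := by
      intro c
      unfold qpart
      refine Finset.prod_congr rfl fun i _ => ?_
      rw [Function.update_self]
    simp only [hq]
    rw [← Fintype.prod_sum (fun i (c : M.X i) => M.QX i c v (M.prevA b k))]
    simp [M.QX_sum]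

lemma chain (p : ∀ i, (Fin T → M.X i) → Prop)
    (hp : ∀ i y y', (∀ s, s ≤ t → y s = y' s) → (p i y ↔ p i y')) :
    ∀ d k, (t : ℕ) < k → k + d = T →
      ((Fintype.card (∀ i, M.A i) : ℝ) * (Fintype.card (∀ i, M.X i) : ℝ)) ^ d
          * Pk M t v xd ad a p T
        = Pk M t v xd ad a p k := by
  intro d
  induction d with
  | zero => intro k h1 h2; simp only [pow_zero, one_mul]; rw [Nat.add_zero] at h2; rw [h2]
  | succ d ih =>
    intro k h1 h2
    have hkT : k < T := by omega
    have e1 := ih (k + 1) (by omega) (by omega)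
    have e2 := stepg M t v xd ad a p ⟨k, hkT⟩ (Fin.le_def.mpr (by simp; omega))
    have e3 := stepq M t v xd ad a p hp ⟨k, hkT⟩ (Fin.lt_def.mpr (by simp; omega))
    calc ((Fintype.card (∀ i, M.A i) : ℝ) * (Fintype.card (∀ i, M.X i) : ℝ)) ^ (d + 1)
          * Pk M t v xd ad a p T
        = (Fintype.card (∀ i, M.X i) : ℝ) * ((Fintype.card (∀ i, M.A i) : ℝ) *
            (((Fintype.card (∀ i, M.A i) : ℝ) * (Fintype.card (∀ i, M.X i) : ℝ)) ^ d
              * Pk M t v xd ad a p T)) := by ring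
      _ = (Fintype.card (∀ i, M.X i) : ℝ) * ((Fintype.card (∀ i, M.A i) : ℝ) *
            Pk M t v xd ad a p (k + 1)) := by rw [e1]
      _ = (Fintype.card (∀ i, M.X i) : ℝ) * Pk' M t v xd ad a p ⟨k, hkT⟩ := by rw [← e2]
      _ = Pk M t v xd ad a p k := e3

lemma prevA_agree (b b' : Fin T → ∀ i, M.A i)
    (h : ∀ s' : Fin T, (s' : ℕ) < (t : ℕ) → b s' = b' s') (s : Fin T)
    (hs : (s : ℕ) ≤ (t : ℕ)) :
    M.prevA b s = M.prevA b' s := by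
  unfold GameModel.prevA
  split
  · rfl
  · next h0 =>
    refine h ⟨(s : ℕ) - 1, lt_of_le_of_lt (Nat.sub_le _ _) s.isLt⟩ ?_
    simp only [Fin.val_mk]
    omega

lemma ta_agree (b b' : Fin T → ∀ i, M.A i)
    (h : ∀ s' : Fin T, (s' : ℕ) < (t : ℕ) → b s' = b' s') (s : Fin T)
    (hs : (s : ℕ) ≤ (t : ℕ)) :
    ta M ad s b = ta M ad s b' := by
  funext s'
  unfold ta
  split
  · next h' =>
    refine h s' ?_
    have := Fin.lt_def.mp h'
    omega
  · rfl

open Classical in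
lemma collapseB (W : (Fin T → ∀ i, M.A i) → ℝ)
    (hW : ∀ b b', (∀ s, s < t → b s = b' s) → W b = W b') :
    ∑ b : Fin T → ∀ i, M.A i, (if ∀ s, s < t → b s = a s then (1 : ℝ) else 0) * W b
      = (Fintype.card ({s : Fin T // ¬ s < t} → ∀ i, M.A i) : ℝ) * W (ta M ad t a) := by
  classical
  set e := Equiv.piEquivPiSubtypeProd (fun s : Fin T => s < t)
    (fun _ : Fin T => ∀ i, M.A i) with he
  rw [← Equiv.sum_comp e.symm, Fintype.sum_prod_type]
  have hcond : ∀ (u : {s : Fin T // s < t} → ∀ i, M.A i)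
      (w : {s : Fin T // ¬ s < t} → ∀ i, M.A i),
      (∀ s, s < t → e.symm (u, w) s = a s)
        ↔ u = fun s : {s : Fin T // s < t} => a s := by
    intro u w
    constructor
    · intro h
      funext s
      rw [← h s s.2]
      simp [he, Equiv.piEquivPiSubtypeProd, s.2]
    · intro h s hs
      subst h
      simp [he, Equiv.piEquivPiSubtypeProd, hs]
  have hstep : ∀ (u : {s : Fin T // s < t} → ∀ i, M.A i)
      (w : {s : Fin T // ¬ s < t} → ∀ i, M.A i),
      (if ∀ s, s < t → e.symm (u, w) s = a s then (1 : ℝ) else 0) * W (e.symm (u, w))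
      = (if u = (fun s : {s : Fin T // s < t} => a s) then (1 : ℝ) else 0)
          * W (e.symm (u, w)) := by
    intro u w
    congr 1
    exact if_congr (hcond u w) rfl rfl
  simp only [hstep]
  rw [Finset.sum_comm]
  have hinner : ∀ w : {s : Fin T // ¬ s < t} → ∀ i, M.A i,
      ∑ u : {s : Fin T // s < t} → ∀ i, M.A i,
        (if u = (fun s : {s : Fin T // s < t} => a s) then (1 : ℝ) else 0)
          * W (e.symm (u, w))
      = W (ta M ad t a) := by
    intro w
    rw [Finset.sum_eq_single (fun s : {s : Fin T // s < t} => a s)]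
    · rw [if_pos rfl, one_mul]
      refine hW _ _ fun s hs => ?_
      have h1 : e.symm ((fun s : {s : Fin T // s < t} => a s), w) s = a s := by
        simp [he, Equiv.piEquivPiSubtypeProd, hs]
      rw [h1]
      unfold ta
      rw [if_pos hs]
    · intro u _ hu
      rw [if_neg hu, zero_mul]
    · intro h
      exact absurd (Finset.mem_univ _) h
  simp only [hinner]
  rw [Finset.sum_const, Finset.card_univ, nsmul_eq_mul]

noncomputable def Fi (i : Fin N) (y : Fin T → M.X i) : ℝ :=
  (∏ s ∈ univ.filter (fun s : Fin T => (s : ℕ) ≤ (t : ℕ)), M.QX i (y s) v (M.prevA a s)) *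
    ∏ s ∈ univ.filter (fun s : Fin T => (s : ℕ) < (t : ℕ)), M.g i s (a s i) y a

open Classical in
noncomputable def Di (p : ∀ i, (Fin T → M.X i) → Prop) (i : Fin N) : ℝ :=
  ∑ y : Fin T → M.X i, (if p i y then (1 : ℝ) else 0) * Fi M t v a i y

lemma filter_le_eq (t : Fin T) :
    univ.filter (fun s : Fin T => (s : ℕ) ≤ (t : ℕ))
      = insert t (univ.filter (fun s : Fin T => (s : ℕ) < (t : ℕ))) := by
  ext s
  simp only [mem_filter, mem_univ, true_and, mem_insert, Fin.ext_iff]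
  omega

open Classical in
lemma ite_forall_prod {q : Fin N → Prop} :
    (if ∀ i, q i then (1 : ℝ) else 0) = ∏ i, (if q i then (1 : ℝ) else 0) := by
  by_cases h : ∀ i, q i
  · rw [if_pos h]
    rw [Finset.prod_congr rfl fun i _ => if_pos (h i)]
    simp
  · rw [if_neg h]
    push_neg at h
    obtain ⟨i, hi⟩ := h
    symm
    apply Finset.prod_eq_zero (Finset.mem_univ i)
    rw [if_neg hi]

lemma sum_prod_swap (G : ∀ i, (Fin T → M.X i) → ℝ) :
    ∑ xx : Fin T → ∀ i, M.X i, ∏ i, G i (fun s => xx s i)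
      = ∏ i, ∑ y : Fin T → M.X i, G i y := by
  rw [Fintype.prod_sum G]
  exact Equiv.sum_comp (Equiv.piComm fun (s : Fin T) (i : Fin N) => M.X i)
    (fun z => ∏ i, G i (z i))

open Classical in
lemma Pk'_t (p : ∀ i, (Fin T → M.X i) → Prop) :
    Pk' M t v xd ad a p t
      = (Fintype.card ({s : Fin T // ¬ s < t} → ∀ i, M.A i) : ℝ)
          * ∏ i, Di M t v a p i := by
  classical
  unfold Pk'
  have hsplit : ∀ (xx : Fin T → ∀ i, M.X i) (b : Fin T → ∀ i, M.A i),
      ind M t a p xx b * (qpart M v t xx b *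
        ∏ s ∈ univ.filter (fun s : Fin T => (s : ℕ) < (t : ℕ)),
          (qpart M v s xx b * gpart M xd ad s xx b))
      = (if ∀ s, s < t → b s = a s then (1 : ℝ) else 0) *
        ((if ∀ i, p i (fun s => xx s i) then (1 : ℝ) else 0) *
          (qpart M v t xx b *
            ∏ s ∈ univ.filter (fun s : Fin T => (s : ℕ) < (t : ℕ)),
              (qpart M v s xx b * gpart M xd ad s xx b))) := by
    intro xx b
    unfold ind
    by_cases h1 : ∀ i, p i (fun s => xx s i) <;> by_cases h2 : ∀ s, s < t → b s = a s <;>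
      simp [h1, h2]
  simp only [hsplit]
  have hcol : ∀ xx : Fin T → ∀ i, M.X i,
      ∑ b : Fin T → ∀ i, M.A i,
        (if ∀ s, s < t → b s = a s then (1 : ℝ) else 0) *
          ((if ∀ i, p i (fun s => xx s i) then (1 : ℝ) else 0) *
            (qpart M v t xx b *
              ∏ s ∈ univ.filter (fun s : Fin T => (s : ℕ) < (t : ℕ)),
                (qpart M v s xx b * gpart M xd ad s xx b)))
      = (Fintype.card ({s : Fin T // ¬ s < t} → ∀ i, M.A i) : ℝ) *
          ((if ∀ i, p i (fun s => xx s i) then (1 : ℝ) else 0) *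
            (qpart M v t xx (ta M ad t a) *
              ∏ s ∈ univ.filter (fun s : Fin T => (s : ℕ) < (t : ℕ)),
                (qpart M v s xx (ta M ad t a) * gpart M xd ad s xx (ta M ad t a)))) := by
    intro xx
    refine collapseB M t ad a _ ?_
    intro b b' hagree
    have hagree' : ∀ s' : Fin T, (s' : ℕ) < (t : ℕ) → b s' = b' s' :=
      fun s' hs' => hagree s' (Fin.lt_def.mpr hs')
    congr 1
    congr 1
    · unfold qpart
      rw [prevA_agree M t b b' hagree' t (le_refl _)]
    · refine Finset.prod_congr rfl fun s hs => ?_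
      have hst : (s : ℕ) < (t : ℕ) := by simpa using hs
      congr 1
      · unfold qpart
        rw [prevA_agree M t b b' hagree' s (le_of_lt hst)]
      · unfold gpart
        refine Finset.prod_congr rfl fun i _ => ?_
        rw [hagree' s hst, ta_agree M t ad b b' hagree' s (le_of_lt hst)]
  simp only [hcol]
  rw [← Finset.mul_sum]
  congr 1
  -- now evaluate at ta M ad t a and regroup as product over players
  have htta : ∀ s' : Fin T, (s' : ℕ) < (t : ℕ) → ta M ad t a s' = a s' := by
    intro s' hs'
    unfold ta
    rw [if_pos (Fin.lt_def.mpr hs')]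
  have hxx : ∀ xx : Fin T → ∀ i, M.X i,
      (if ∀ i, p i (fun s => xx s i) then (1 : ℝ) else 0) *
        (qpart M v t xx (ta M ad t a) *
          ∏ s ∈ univ.filter (fun s : Fin T => (s : ℕ) < (t : ℕ)),
            (qpart M v s xx (ta M ad t a) * gpart M xd ad s xx (ta M ad t a)))
      = ∏ i, ((if p i (fun s => xx s i) then (1 : ℝ) else 0) *
          Fi M t v a i (fun s => xx s i)) := by
    intro xx
    have hq : ∀ s : Fin T, (s : ℕ) ≤ (t : ℕ) →
        qpart M v s xx (ta M ad t a) = ∏ i, M.QX i (xx s i) v (M.prevA a s) := by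
      intro s hs
      unfold qpart
      rw [prevA_agree M t (ta M ad t a) a htta s hs]
    have hg : ∀ s : Fin T, (s : ℕ) < (t : ℕ) →
        gpart M xd ad s xx (ta M ad t a)
          = ∏ i, M.g i s (a s i) (fun s' => xx s' i) a := by
      intro s hs
      unfold gpart
      refine Finset.prod_congr rfl fun i _ => ?_
      rw [htta s hs, ta_agree M t ad (ta M ad t a) a htta s (le_of_lt hs),
        g_ty_ta M xd ad i s (a s i) (fun s' => xx s' i) a]
    have e0 : (if ∀ i, p i (fun s => xx s i) then (1 : ℝ) else 0)
        = ∏ i, (if p i (fun s => xx s i) then (1 : ℝ) else 0) := ite_forall_prod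
    have e1 : qpart M v t xx (ta M ad t a)
        = ∏ i, M.QX i (xx t i) v (M.prevA a t) := hq t (le_refl _)
    have e2 : ∏ s ∈ univ.filter (fun s : Fin T => (s : ℕ) < (t : ℕ)),
          (qpart M v s xx (ta M ad t a) * gpart M xd ad s xx (ta M ad t a))
        = (∏ i, ∏ s ∈ univ.filter (fun s : Fin T => (s : ℕ) < (t : ℕ)),
            M.QX i (xx s i) v (M.prevA a s)) *
          ∏ i, ∏ s ∈ univ.filter (fun s : Fin T => (s : ℕ) < (t : ℕ)),
            M.g i s (a s i) (fun s' => xx s' i) a := by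
      calc ∏ s ∈ univ.filter (fun s : Fin T => (s : ℕ) < (t : ℕ)),
            (qpart M v s xx (ta M ad t a) * gpart M xd ad s xx (ta M ad t a))
          = ∏ s ∈ univ.filter (fun s : Fin T => (s : ℕ) < (t : ℕ)),
              ((∏ i, M.QX i (xx s i) v (M.prevA a s)) *
                ∏ i, M.g i s (a s i) (fun s' => xx s' i) a) := by
            refine Finset.prod_congr rfl fun s hs => ?_
            have hst : (s : ℕ) < (t : ℕ) := by simpa using hs
            rw [hq s (le_of_lt hst), hg s hst]
        _ = (∏ s ∈ univ.filter (fun s : Fin T => (s : ℕ) < (t : ℕ)),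
              ∏ i, M.QX i (xx s i) v (M.prevA a s)) *
            ∏ s ∈ univ.filter (fun s : Fin T => (s : ℕ) < (t : ℕ)),
              ∏ i, M.g i s (a s i) (fun s' => xx s' i) a := Finset.prod_mul_distrib
        _ = (∏ i, ∏ s ∈ univ.filter (fun s : Fin T => (s : ℕ) < (t : ℕ)),
              M.QX i (xx s i) v (M.prevA a s)) *
            ∏ i, ∏ s ∈ univ.filter (fun s : Fin T => (s : ℕ) < (t : ℕ)),
              M.g i s (a s i) (fun s' => xx s' i) a :=
          congrArg₂ (· * ·) Finset.prod_comm Finset.prod_comm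
    have e4 : ∏ i, ((if p i (fun s => xx s i) then (1 : ℝ) else 0) *
          Fi M t v a i (fun s => xx s i))
        = (∏ i, (if p i (fun s => xx s i) then (1 : ℝ) else 0)) *
          ((∏ i, M.QX i (xx t i) v (M.prevA a t)) *
            ((∏ i, ∏ s ∈ univ.filter (fun s : Fin T => (s : ℕ) < (t : ℕ)),
                M.QX i (xx s i) v (M.prevA a s)) *
              ∏ i, ∏ s ∈ univ.filter (fun s : Fin T => (s : ℕ) < (t : ℕ)),
                M.g i s (a s i) (fun s' => xx s' i) a)) := by
      have hFi : ∀ i, Fi M t v a i (fun s => xx s i)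
          = M.QX i (xx t i) v (M.prevA a t) *
            ((∏ s ∈ univ.filter (fun s : Fin T => (s : ℕ) < (t : ℕ)),
                M.QX i (xx s i) v (M.prevA a s)) *
              ∏ s ∈ univ.filter (fun s : Fin T => (s : ℕ) < (t : ℕ)),
                M.g i s (a s i) (fun s' => xx s' i) a) := by
        intro i
        unfold Fi
        rw [filter_le_eq, Finset.prod_insert (by simp)]
        ring
      rw [Finset.prod_congr rfl fun i _ => by rw [hFi i]]
      rw [Finset.prod_mul_distrib, Finset.prod_mul_distrib, Finset.prod_mul_distrib]
    rw [e0, e1, e2, e4]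
  simp only [hxx]
  rw [sum_prod_swap M (fun i y => (if p i y then (1 : ℝ) else 0) * Fi M t v a i y)]
  unfold Di
  rfl

lemma Pr_eq (p : ∀ i, (Fin T → M.X i) → Prop) :
    M.Pr (fun ω => (∀ i, p i fun s => ω.2.1 s i) ∧ ω.1 = v ∧ ∀ s, s < t → ω.2.2 s = a s)
      = M.QV v * Pk M t v xd ad a p T := by
  classical
  have key : (∑ ω : M.Hist,
      if (∀ i, p i fun s => ω.2.1 s i) ∧ ω.1 = v ∧ ∀ s, s < t → ω.2.2 s = a s
      then M.jointP ω else 0)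
      = M.QV v * Pk M t v xd ad a p T := by
    unfold Pk
    rw [Fintype.sum_prod_type]
    dsimp only
    have hvcol : ∀ v' : M.V,
        (∑ q : (Fin T → ∀ i, M.X i) × (Fin T → ∀ i, M.A i),
          if (∀ i, p i fun s => q.1 s i) ∧ v' = v ∧ ∀ s, s < t → q.2 s = a s
          then M.jointP (v', q) else 0)
        = if v' = v then
            ∑ q : (Fin T → ∀ i, M.X i) × (Fin T → ∀ i, M.A i),
              (if (∀ i, p i fun s => q.1 s i) ∧ ∀ s, s < t → q.2 s = a s
               then M.jointP (v', q) else 0)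
          else 0 := by
      intro v'
      by_cases hv : v' = v
      · rw [if_pos hv]
        refine Finset.sum_congr rfl fun q _ => ?_
        by_cases h : (∀ i, p i fun s => q.1 s i) ∧ ∀ s, s < t → q.2 s = a s
        · rw [if_pos ⟨h.1, hv, h.2⟩, if_pos h]
        · rw [if_neg (fun hc => h ⟨hc.1, hc.2.2⟩), if_neg h]
      · rw [if_neg hv]
        refine Finset.sum_eq_zero fun q _ => ?_
        rw [if_neg (fun hc => hv hc.2.1)]
    refine ((Finset.sum_congr rfl fun v' _ => hvcol v').trans ?_)
    rw [Finset.sum_ite_eq' univ v]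
    rw [if_pos (Finset.mem_univ v)]
    rw [Fintype.sum_prod_type]
    have hfT : univ.filter (fun s : Fin T => (s : ℕ) < T) = univ :=
      Finset.filter_true_of_mem fun s _ => s.isLt
    rw [Finset.mul_sum]
    refine Finset.sum_congr rfl fun xx _ => ?_
    rw [Finset.mul_sum]
    refine Finset.sum_congr rfl fun b _ => ?_
    rw [hfT]
    unfold ind
    by_cases h : (∀ i, p i fun s => xx s i) ∧ ∀ s, s < t → b s = a s
    · rw [if_pos h, if_pos h, jointP_eq M v xd ad xx b, one_mul]
    · rw [if_neg h, if_neg h, zero_mul, mul_zero]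
  refine Eq.trans ?_ key
  unfold GameModel.Pr
  congr!

include xd ad in
lemma KL (p : ∀ i, (Fin T → M.X i) → Prop)
    (hp : ∀ i y y', (∀ s, s ≤ t → y s = y' s) → (p i y ↔ p i y')) :
    ((Fintype.card (∀ i, M.A i) : ℝ) *
        ((Fintype.card (∀ i, M.A i) : ℝ) * (Fintype.card (∀ i, M.X i) : ℝ))
          ^ (T - ((t : ℕ) + 1)))
      * M.Pr (fun ω => (∀ i, p i fun s => ω.2.1 s i) ∧ ω.1 = v ∧
          ∀ s, s < t → ω.2.2 s = a s)
    = (Fintype.card ({s : Fin T // ¬ s < t} → ∀ i, M.A i) : ℝ)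
        * (M.QV v * ∏ i, Di M t v a p i) := by
  have h1 := chain M t v xd ad a p hp (T - ((t : ℕ) + 1)) ((t : ℕ) + 1)
    (by omega) (by have := t.isLt; omega)
  have h2 := stepg M t v xd ad a p t (le_refl t)
  have h3 := Pk'_t M t v xd ad a p
  rw [Pr_eq M t v xd ad a p]
  calc ((Fintype.card (∀ i, M.A i) : ℝ) *
        ((Fintype.card (∀ i, M.A i) : ℝ) * (Fintype.card (∀ i, M.X i) : ℝ))
          ^ (T - ((t : ℕ) + 1))) * (M.QV v * Pk M t v xd ad a p T)
      = M.QV v * ((Fintype.card (∀ i, M.A i) : ℝ) *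
          (((Fintype.card (∀ i, M.A i) : ℝ) * (Fintype.card (∀ i, M.X i) : ℝ))
            ^ (T - ((t : ℕ) + 1)) * Pk M t v xd ad a p T)) := by ring
    _ = M.QV v * ((Fintype.card (∀ i, M.A i) : ℝ) *
          Pk M t v xd ad a p ((t : ℕ) + 1)) := by rw [h1]
    _ = M.QV v * Pk' M t v xd ad a p t := by rw [h2]
    _ = (Fintype.card ({s : Fin T // ¬ s < t} → ∀ i, M.A i) : ℝ)
          * (M.QV v * ∏ i, Di M t v a p i) := by rw [h3]; ring

lemma Pr_congr (E E' : M.Hist → Prop) (h : ∀ ω, E ω ↔ E' ω) : M.Pr E = M.Pr E' := by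
  classical
  unfold GameModel.Pr
  exact Finset.sum_congr rfl fun ω _ => if_congr (h ω) rfl rfl

lemma Fi_nonneg (i : Fin N) (y : Fin T → M.X i) : 0 ≤ Fi M t v a i y := by
  unfold Fi
  refine mul_nonneg (Finset.prod_nonneg fun s _ => M.QX_nonneg _ _ _ _)
    (Finset.prod_nonneg fun s _ => M.g_nonneg _ _ _ _ _)

lemma Di_nonneg (p : ∀ i, (Fin T → M.X i) → Prop) (i : Fin N) :
    0 ≤ Di M t v a p i := by
  unfold Di
  refine Finset.sum_nonneg fun y _ => mul_nonneg ?_ (Fi_nonneg M t v a i y)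
  split <;> norm_num

end Aux
end CondIndepAux

open CondIndepAux in
/-- the private observation histories of the players are conditionally
independent given the state of the world `v` and the public action history `a_{1:t-1}`:
`ℙ(X_{1:t} = x_{1:t} | V = v, A_{1:t-1} = a_{1:t-1})
  = ∏_i ℙ(X^i_{1:t} = x^i_{1:t} | V = v, A_{1:t-1} = a_{1:t-1})`,
whenever the conditioning event has positive probability.
(Here `t : Fin T` is the index of the time called `t`, so `x_{1:t}` is the condition
on indices `s ≤ t` and `a_{1:t-1}` the condition on indices `s < t`.) -/
theorem conditional_independence_of_private_histories
    (M : GameModel N T) (t : Fin T) (v : M.V)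
    (a : Fin T → ∀ i, M.A i) (x : Fin T → ∀ i, M.X i)
    (hpos : 0 < M.Pr fun ω => ω.1 = v ∧ ∀ s, s < t → ω.2.2 s = a s) :
    M.Pr (fun ω => (∀ s, s ≤ t → ω.2.1 s = x s) ∧ ω.1 = v ∧ ∀ s, s < t → ω.2.2 s = a s)
        / M.Pr (fun ω => ω.1 = v ∧ ∀ s, s < t → ω.2.2 s = a s)
      = ∏ i : Fin N,
          M.Pr (fun ω => (∀ s, s ≤ t → ω.2.1 s i = x s i) ∧
              ω.1 = v ∧ ∀ s, s < t → ω.2.2 s = a s)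
            / M.Pr (fun ω => ω.1 = v ∧ ∀ s, s < t → ω.2.2 s = a s) := by
  classical
  -- nonemptiness of the outcome space
  have hne : Nonempty M.Hist := by
    by_contra h
    rw [not_nonempty_iff] at h
    have h0 : M.Pr (fun ω => ω.1 = v ∧ ∀ s, s < t → ω.2.2 s = a s) = 0 := by
      unfold GameModel.Pr
      rw [Finset.univ_eq_empty, Finset.sum_empty]
    rw [h0] at hpos
    exact lt_irrefl 0 hpos
  obtain ⟨ω₀⟩ := hne
  have xd : ∀ i, M.X i := ω₀.2.1 t
  have ad : ∀ i, M.A i := ω₀.2.2 t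
  haveI : Nonempty (∀ i, M.A i) := ⟨ad⟩
  haveI : Nonempty (∀ i, M.X i) := ⟨xd⟩
  haveI : Nonempty ({s : Fin T // ¬ s < t} → ∀ i, M.A i) := ⟨fun _ => ad⟩
  -- the three predicate families
  have hpnum : ∀ (i : Fin N) (y y' : Fin T → M.X i), (∀ s, s ≤ t → y s = y' s) →
      ((∀ s, s ≤ t → y s = x s i) ↔ (∀ s, s ≤ t → y' s = x s i)) := by
    intro i y y' hyy
    constructor <;> intro h s hs
    · rw [← hyy s hs]; exact h s hs
    · rw [hyy s hs]; exact h s hs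
  -- packaged conclusions of the key lemma
  have pack : ∃ C1 K : ℝ, 0 < C1 ∧ 0 ≤ K ∧
      (C1 * M.Pr (fun ω => (∀ s, s ≤ t → ω.2.1 s = x s) ∧ ω.1 = v ∧
          ∀ s, s < t → ω.2.2 s = a s)
        = K * ∏ i, Di M t v a (fun i y => ∀ s, s ≤ t → y s = x s i) i) ∧
      (C1 * M.Pr (fun ω => ω.1 = v ∧ ∀ s, s < t → ω.2.2 s = a s)
        = K * ∏ i, Di M t v a (fun _ _ => True) i) ∧
      (∀ i, C1 * M.Pr (fun ω => (∀ s, s ≤ t → ω.2.1 s i = x s i) ∧ ω.1 = v ∧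
          ∀ s, s < t → ω.2.2 s = a s)
        = K * ∏ j, (if j = i then Di M t v a (fun i y => ∀ s, s ≤ t → y s = x s i) j
            else Di M t v a (fun _ _ => True) j)) := by
    have hcA : 0 < (Fintype.card (∀ i, M.A i) : ℝ) := by
      exact_mod_cast Fintype.card_pos
    have hcX : 0 < (Fintype.card (∀ i, M.X i) : ℝ) := by
      exact_mod_cast Fintype.card_pos
    have hCA2 : 0 < (Fintype.card ({s : Fin T // ¬ s < t} → ∀ i, M.A i) : ℝ) := by
      exact_mod_cast Fintype.card_pos
    refine ⟨(Fintype.card (∀ i, M.A i) : ℝ) *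
        ((Fintype.card (∀ i, M.A i) : ℝ) * (Fintype.card (∀ i, M.X i) : ℝ))
          ^ (T - ((t : ℕ) + 1)),
      (Fintype.card ({s : Fin T // ¬ s < t} → ∀ i, M.A i) : ℝ) * M.QV v,
      by positivity, mul_nonneg hCA2.le (M.QV_nonneg v), ?_, ?_, ?_⟩
    · have Knum := KL M t v xd ad a (fun i y => ∀ s, s ≤ t → y s = x s i) hpnum
      have enum : M.Pr (fun ω => (∀ i, (∀ s, s ≤ t → ω.2.1 s i = x s i)) ∧ ω.1 = v ∧
          ∀ s, s < t → ω.2.2 s = a s)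
          = M.Pr (fun ω => (∀ s, s ≤ t → ω.2.1 s = x s) ∧ ω.1 = v ∧
              ∀ s, s < t → ω.2.2 s = a s) := by
        refine Pr_congr M _ _ fun ω => and_congr_left fun _ => ?_
        constructor
        · intro h s hs; funext i; exact h i s hs
        · intro h i s hs; rw [h s hs]
      rw [enum] at Knum
      rw [Knum]; ring
    · have Kden := KL M t v xd ad a (fun _ _ => True) (fun _ _ _ _ => Iff.rfl)
      have eden : M.Pr (fun ω => (∀ i : Fin N, True) ∧ ω.1 = v ∧
          ∀ s, s < t → ω.2.2 s = a s)
          = M.Pr (fun ω => ω.1 = v ∧ ∀ s, s < t → ω.2.2 s = a s) := by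
        refine Pr_congr M _ _ fun ω => ?_
        simp
      rw [eden] at Kden
      rw [Kden]; ring
    · intro i
      have hpmar : ∀ (j : Fin N) (y y' : Fin T → M.X j), (∀ s, s ≤ t → y s = y' s) →
          ((j = i → ∀ s, s ≤ t → y s = x s j) ↔ (j = i → ∀ s, s ≤ t → y' s = x s j)) := by
        intro j y y' hyy
        constructor <;> intro h hj s hs
        · rw [← hyy s hs]; exact h hj s hs
        · rw [hyy s hs]; exact h hj s hs
      have Kmar := KL M t v xd ad a (fun j y => j = i → ∀ s, s ≤ t → y s = x s j) hpmar
      have emar : M.Pr (fun ω => (∀ j, (j = i → ∀ s, s ≤ t → ω.2.1 s j = x s j)) ∧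
          ω.1 = v ∧ ∀ s, s < t → ω.2.2 s = a s)
          = M.Pr (fun ω => (∀ s, s ≤ t → ω.2.1 s i = x s i) ∧ ω.1 = v ∧
              ∀ s, s < t → ω.2.2 s = a s) := by
        refine Pr_congr M _ _ fun ω => and_congr_left fun _ => ?_
        constructor
        · intro h s hs; exact h i rfl s hs
        · intro h j hj s hs; subst hj; exact h s hs
      rw [emar] at Kmar
      have hmarD : ∀ j, Di M t v a (fun j y => j = i → ∀ s, s ≤ t → y s = x s j) j
          = if j = i then Di M t v a (fun i y => ∀ s, s ≤ t → y s = x s i) j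
            else Di M t v a (fun _ _ => True) j := by
        intro j
        rcases eq_or_ne j i with rfl | hji
        · rw [if_pos rfl]
          unfold Di
          refine Finset.sum_congr rfl fun y _ => ?_
          by_cases hP : ∀ s, s ≤ t → y s = x s j
          · rw [if_pos (fun _ => hP), if_pos hP]
          · rw [if_neg (fun hc => hP (hc rfl)), if_neg hP]
        · rw [if_neg hji]
          unfold Di
          refine Finset.sum_congr rfl fun y _ => ?_
          rw [if_pos (fun hc => absurd hc hji), if_pos trivial]
      rw [Finset.prod_congr rfl fun j _ => hmarD j] at Kmar
      rw [Kmar]; ring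
  obtain ⟨C1, K, hC1, hK0, eN, eD, eM⟩ := pack
  have hSnn : ∀ j, 0 ≤ Di M t v a (fun _ _ => True) j := fun j => Di_nonneg M t v a _ j
  have hKS : 0 < K * ∏ i, Di M t v a (fun _ _ => True) i := by
    rw [← eD]; exact mul_pos hC1 hpos
  have hPS0 : 0 ≤ ∏ i, Di M t v a (fun _ _ => True) i :=
    Finset.prod_nonneg fun i _ => hSnn i
  have hK : 0 < K := by
    rcases hK0.lt_or_eq with h | h
    · exact h
    · exfalso; rw [← h, zero_mul] at hKS; exact lt_irrefl 0 hKS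
  have hPS : 0 < ∏ i, Di M t v a (fun _ _ => True) i := by
    rcases hPS0.lt_or_eq with h | h
    · exact h
    · exfalso; rw [← h, mul_zero] at hKS; exact lt_irrefl 0 hKS
  have hSi : ∀ i, 0 < Di M t v a (fun _ _ => True) i := by
    intro i
    rcases (hSnn i).lt_or_eq with h | h
    · exact h
    · exfalso
      exact hPS.ne' (Finset.prod_eq_zero (Finset.mem_univ i) h.symm)
  have key1 : M.Pr (fun ω => (∀ s, s ≤ t → ω.2.1 s = x s) ∧ ω.1 = v ∧
        ∀ s, s < t → ω.2.2 s = a s)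
      / M.Pr (fun ω => ω.1 = v ∧ ∀ s, s < t → ω.2.2 s = a s)
      = (∏ i, Di M t v a (fun i y => ∀ s, s ≤ t → y s = x s i) i)
        / ∏ i, Di M t v a (fun _ _ => True) i := by
    rw [div_eq_div_iff hpos.ne' hPS.ne']
    apply mul_left_cancel₀ (mul_ne_zero hC1.ne' hK.ne')
    linear_combination (K * ∏ i, Di M t v a (fun _ _ => True) i) * eN
      - (K * ∏ i, Di M t v a (fun i y => ∀ s, s ≤ t → y s = x s i) i) * eD
  have key2 : ∀ i, M.Pr (fun ω => (∀ s, s ≤ t → ω.2.1 s i = x s i) ∧ ω.1 = v ∧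
        ∀ s, s < t → ω.2.2 s = a s)
      / M.Pr (fun ω => ω.1 = v ∧ ∀ s, s < t → ω.2.2 s = a s)
      = Di M t v a (fun i y => ∀ s, s ≤ t → y s = x s i) i
        / Di M t v a (fun _ _ => True) i := by
    intro i
    have hPA : ∏ j, (if j = i then Di M t v a (fun i y => ∀ s, s ≤ t → y s = x s i) j
          else Di M t v a (fun _ _ => True) j)
        = Di M t v a (fun i y => ∀ s, s ≤ t → y s = x s i) i *
            ∏ j ∈ Finset.univ.erase i, Di M t v a (fun _ _ => True) j := by
      rw [← Finset.mul_prod_erase Finset.univ _ (Finset.mem_univ i), if_pos rfl]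
      congr 1
      exact Finset.prod_congr rfl fun j hj => if_neg (Finset.ne_of_mem_erase hj)
    have hPS' : ∏ j, Di M t v a (fun _ _ => True) j
        = Di M t v a (fun _ _ => True) i *
            ∏ j ∈ Finset.univ.erase i, Di M t v a (fun _ _ => True) j :=
      (Finset.mul_prod_erase Finset.univ _ (Finset.mem_univ i)).symm
    have hE : 0 < ∏ j ∈ Finset.univ.erase i, Di M t v a (fun _ _ => True) j :=
      Finset.prod_pos fun j _ => hSi j
    have eMi := eM i
    rw [hPA] at eMi
    have eD' := eD
    rw [hPS'] at eD'
    rw [div_eq_div_iff hpos.ne' (hSi i).ne']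
    apply mul_left_cancel₀
      (mul_ne_zero (mul_ne_zero hC1.ne' hK.ne') hE.ne')
    linear_combination (K * (Di M t v a (fun _ _ => True) i *
        ∏ j ∈ Finset.univ.erase i, Di M t v a (fun _ _ => True) j)) * eMi
      - (K * (Di M t v a (fun i y => ∀ s, s ≤ t → y s = x s i) i *
          ∏ j ∈ Finset.univ.erase i, Di M t v a (fun _ _ => True) j)) * eD'
  calc M.Pr (fun ω => (∀ s, s ≤ t → ω.2.1 s = x s) ∧ ω.1 = v ∧
        ∀ s, s < t → ω.2.2 s = a s)
      / M.Pr (fun ω => ω.1 = v ∧ ∀ s, s < t → ω.2.2 s = a s)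
      = (∏ i, Di M t v a (fun i y => ∀ s, s ≤ t → y s = x s i) i)
        / ∏ i, Di M t v a (fun _ _ => True) i := key1
    _ = ∏ i, (Di M t v a (fun i y => ∀ s, s ≤ t → y s = x s i) i
        / Di M t v a (fun _ _ => True) i) := (Finset.prod_div_distrib _ _).symm
    _ = ∏ i, (M.Pr (fun ω => (∀ s, s ≤ t → ω.2.1 s i = x s i) ∧ ω.1 = v ∧
          ∀ s, s < t → ω.2.2 s = a s)
        / M.Pr (fun ω => ω.1 = v ∧ ∀ s, s < t → ω.2.2 s = a s)) :=
      Finset.prod_congr rfl fun i _ => (key2 i).symm
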